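/- arXiv:1610.08561 — 6 statements merged into one kernel-verified Lean document; each statement's English description precedes it below -/
import Mathlib

section
/- Fix λ > −1, positive integers n and N, and s ∈ [0,1]; set q = n/N. The recurrence coefficients α_n, β_n of the monic orthogonal polynomials for the weight w(x;λ,s) = x^λ exp(−N(x + s(x^2 − x))) on [0,∞) satisfy the string equations: 2s(β_{n+1} + β_n + α_n^2) + (1−s) α_n = 2q + (λ+1)/N, and β_n (2s α_n + 1 − s)(2s α_{n−1} + 1 − s) = (2s β_n − q)(2s β_n − q − λ/N). -/
open MeasureTheory Real Polynomial

/-- Deformed Laguerre weight `w(x;lam,s) = x^lam exp(-N(x + s(x^2 - x)))`. -/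
noncomputable def w (lam : ℝ) (N : ℕ) (s : ℝ) (x : ℝ) : ℝ :=
  x ^ lam * Real.exp (-(N : ℝ) * (x + s * (x ^ 2 - x)))

lemma exp_bound (N : ℕ) (hN : 1 ≤ N) {s : ℝ} (hs : s ∈ Set.Icc (0:ℝ) 1) {x : ℝ} (hx : 0 < x) :
    Real.exp (-(N : ℝ) * (x + s * (x ^ 2 - x))) ≤ Real.exp 1 * Real.exp (-x) := by
  rw [← Real.exp_add]
  apply Real.exp_le_exp.2
  have hN1 : (1:ℝ) ≤ N := by exact_mod_cast hN
  have h1 : 0 ≤ x + s * (x^2 - x) := by nlinarith [hs.1, hs.2, sq_nonneg x, sq_nonneg (x-1)]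
  have h2 : x - 1 ≤ x + s * (x^2 - x) := by
    nlinarith [hs.1, hs.2, sq_nonneg (x - 1/2), sq_nonneg (2*x-1)]
  nlinarith

lemma int_mono (lam : ℝ) (hlam : -1 < lam) (i : ℕ) :
    IntegrableOn (fun x : ℝ => x ^ i * x ^ lam * Real.exp (-x)) (Set.Ioi 0) := by
  have h := Real.GammaIntegral_convergent (s := lam + i + 1)
    (by have := Nat.cast_nonneg (α:=ℝ) i; linarith)
  apply h.congr_fun _ measurableSet_Ioi
  intro x hx
  have hx' : (0:ℝ) < x := hx
  simp only []
  rw [show lam + (i:ℝ) + 1 - 1 = (i:ℝ) + lam by ring, Real.rpow_add hx', Real.rpow_natCast x i]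
  ring

lemma integrable_poly_w (lam : ℝ) (hlam : -1 < lam) (N : ℕ) (hN : 1 ≤ N) {s : ℝ}
    (hs : s ∈ Set.Icc (0:ℝ) 1) (p : Polynomial ℝ) :
    IntegrableOn (fun x => p.eval x * w lam N s x) (Set.Ioi 0) := by
  have hmeas : AEStronglyMeasurable (fun x => p.eval x * w lam N s x)
      (volume.restrict (Set.Ioi (0:ℝ))) := by
    apply ContinuousOn.aestronglyMeasurable _ measurableSet_Ioi
    apply ContinuousOn.mul (Polynomial.continuous p).continuousOn
    apply ContinuousOn.mul
    · exact fun x hx => (Real.continuousAt_rpow_const x lam (Or.inl (ne_of_gt hx))).continuousWithinAt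
    · exact (Real.continuous_exp.comp (by continuity)).continuousOn
  set g : ℝ → ℝ := fun x => Real.exp 1 *
      ∑ i ∈ Finset.range (p.natDegree + 1), |p.coeff i| * (x ^ i * x ^ lam * Real.exp (-x)) with hg
  have hgint : IntegrableOn g (Set.Ioi 0) := by
    apply Integrable.const_mul
    apply MeasureTheory.integrable_finset_sum
    intro i _
    exact ((int_mono lam hlam i).const_mul _)
  apply hgint.mono' hmeas
  rw [ae_restrict_iff' measurableSet_Ioi]
  filter_upwards with x
  intro hx
  have hx' : (0:ℝ) < x := hx
  have hwpos : 0 ≤ x ^ lam := Real.rpow_nonneg hx'.le lam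
  have hb := exp_bound N hN hs hx'
  have hev : |p.eval x| ≤ ∑ i ∈ Finset.range (p.natDegree + 1), |p.coeff i| * x ^ i := by
    rw [Polynomial.eval_eq_sum_range (p := p) x]
    refine le_trans (Finset.abs_sum_le_sum_abs _ _) ?_
    apply Finset.sum_le_sum
    intro i _
    rw [abs_mul, abs_of_nonneg (pow_nonneg hx'.le i)]
  rw [Real.norm_eq_abs, abs_mul, w, abs_mul, abs_of_nonneg hwpos,
    abs_of_nonneg (Real.exp_nonneg _)]
  calc |p.eval x| * (x ^ lam * Real.exp (-(N : ℝ) * (x + s * (x ^ 2 - x))))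
      ≤ (∑ i ∈ Finset.range (p.natDegree + 1), |p.coeff i| * x ^ i) *
        (x ^ lam * (Real.exp 1 * Real.exp (-x))) := by
        apply mul_le_mul hev (by apply mul_le_mul_of_nonneg_left hb hwpos)
          (mul_nonneg hwpos (Real.exp_nonneg _)) (Finset.sum_nonneg fun i _ => by positivity)
    _ = g x := by
        simp only [hg, Finset.mul_sum, Finset.sum_mul]
        apply Finset.sum_congr rfl
        intro i _
        ring

lemma star_id (lam : ℝ) (hlam : -1 < lam) (N : ℕ) (hN : 1 ≤ N) {s : ℝ}
    (hs : s ∈ Set.Icc (0:ℝ) 1) (p : Polynomial ℝ) :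
    ∫ x in Set.Ioi (0:ℝ),
      (X * derivative p + C (lam+1) * p - C ((N:ℝ)*(1-s)) * (X*p)
        - C (2*(N:ℝ)*s) * (X^2*p)).eval x * w lam N s x = 0 := by
  set q : Polynomial ℝ := X * derivative p + C (lam+1) * p - C ((N:ℝ)*(1-s)) * (X*p)
        - C (2*(N:ℝ)*s) * (X^2*p) with hq
  set F : ℝ → ℝ := fun x => x ^ (lam+1) *
      (Real.exp (-(N:ℝ) * (x + s * (x ^ 2 - x))) * p.eval x) with hF
  have hF0 : F 0 = 0 := by
    simp [hF, Real.zero_rpow (by linarith : lam + 1 ≠ 0)]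
  have hcont : ContinuousWithinAt F (Set.Ici (0:ℝ)) 0 := by
    apply ContinuousWithinAt.mul
    · exact (Real.continuousAt_rpow_const 0 (lam+1) (Or.inr (by linarith))).continuousWithinAt
    · exact (((Real.continuous_exp.comp (by continuity)).mul p.continuous).continuousAt).continuousWithinAt
  have hderiv : ∀ x ∈ Set.Ioi (0:ℝ), HasDerivAt F (q.eval x * w lam N s x) x := by
    intro x hx
    have hx' : (0:ℝ) < x := hx
    have h1 : HasDerivAt (fun y : ℝ => y ^ (lam+1)) ((lam+1) * x ^ lam) x := by
      have := Real.hasDerivAt_rpow_const (x := x) (p := lam+1) (Or.inl hx'.ne')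
      simpa [show lam + 1 - 1 = lam by ring] using this
    have h2 : HasDerivAt (fun y : ℝ => -(N:ℝ) * (y + s * (y^2 - y)))
        (-(N:ℝ) * (1 + s * (2*x - 1))) x := by
      have a1 := hasDerivAt_id x
      have a2 := hasDerivAt_pow 2 x
      have := (a1.add ((a2.sub a1).const_mul s)).const_mul (-(N:ℝ))
      simpa using this
    have h3 := Polynomial.hasDerivAt p x
    have h4 := ((h2.exp).mul h3)
    have h5 := h1.mul h4
    have heq : (lam+1) * x ^ lam * (Real.exp (-(N:ℝ) * (x + s * (x^2 - x))) * p.eval x)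
        + x ^ (lam+1) * (Real.exp (-(N:ℝ) * (x + s * (x^2 - x))) * (-(N:ℝ) * (1 + s * (2*x - 1))) * p.eval x
          + Real.exp (-(N:ℝ) * (x + s * (x^2 - x))) * (derivative p).eval x)
        = q.eval x * w lam N s x := by
      rw [hq, w]
      simp only [eval_sub, eval_add, eval_mul, eval_C, eval_X, eval_pow]
      rw [show lam + 1 = lam + 1 from rfl, Real.rpow_add hx' lam 1, Real.rpow_one]
      ring
    exact heq ▸ h5
  have hint : IntegrableOn (fun x => q.eval x * w lam N s x) (Set.Ioi 0) :=
    integrable_poly_w lam hlam N hN hs q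
  have htend : Filter.Tendsto F Filter.atTop (nhds 0) := by
    apply squeeze_zero_norm' (a := fun x => ∑ i ∈ Finset.range (p.natDegree + 1),
      (Real.exp 1 * |p.coeff i|) * (x ^ (lam+1+(i:ℝ)) * Real.exp (-1*x)))
    · filter_upwards [Filter.eventually_gt_atTop (0:ℝ)] with x hx'
      have hwpos : (0:ℝ) ≤ x ^ (lam+1) := Real.rpow_nonneg hx'.le _
      have hb := exp_bound N hN hs hx'
      have hev : |p.eval x| ≤ ∑ i ∈ Finset.range (p.natDegree + 1), |p.coeff i| * x ^ i := by
        rw [Polynomial.eval_eq_sum_range (p := p) x]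
        refine le_trans (Finset.abs_sum_le_sum_abs _ _) ?_
        exact Finset.sum_le_sum fun i _ => by
          rw [abs_mul, abs_of_nonneg (pow_nonneg hx'.le i)]
      calc ‖F x‖ = x ^ (lam+1) * Real.exp (-(N:ℝ) * (x + s * (x^2 - x))) * |p.eval x| := by
            rw [hF]; rw [Real.norm_eq_abs, abs_mul, abs_mul, abs_of_nonneg hwpos,
              abs_of_nonneg (Real.exp_nonneg _)]; ring
        _ ≤ x ^ (lam+1) * (Real.exp 1 * Real.exp (-x)) *
            (∑ i ∈ Finset.range (p.natDegree + 1), |p.coeff i| * x ^ i) := by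
            apply mul_le_mul (mul_le_mul_of_nonneg_left hb hwpos) hev (abs_nonneg _)
            positivity
        _ = ∑ i ∈ Finset.range (p.natDegree + 1),
            (Real.exp 1 * |p.coeff i|) * (x ^ (lam+1+(i:ℝ)) * Real.exp (-1*x)) := by
            rw [Finset.mul_sum]
            apply Finset.sum_congr rfl
            intro i _
            have hxi : x ^ (lam+1+(i:ℝ)) = x ^ (lam+1) * x ^ i := by
              rw [Real.rpow_add hx', Real.rpow_natCast]
            rw [hxi, show (-1:ℝ)*x = -x by ring]
            ring
    · have : ∀ i ∈ Finset.range (p.natDegree + 1), Filter.Tendsto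
          (fun x : ℝ => (Real.exp 1 * |p.coeff i|) * (x ^ (lam+1+(i:ℝ)) * Real.exp (-1*x)))
          Filter.atTop (nhds ((Real.exp 1 * |p.coeff i|) * 0)) := by
        intro i _
        exact (tendsto_rpow_mul_exp_neg_mul_atTop_nhds_zero _ 1 one_pos).const_mul _
      have := Filter.Tendsto.congr' (by rfl) (tendsto_finset_sum _ this)
      simpa using this
  have := MeasureTheory.integral_Ioi_of_hasDerivAt_of_tendsto hcont hderiv hint htend
  rw [this, hF0, sub_zero]

noncomputable def J (lam : ℝ) (N : ℕ) (s : ℝ) (p : Polynomial ℝ) : ℝ :=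
  ∫ x in Set.Ioi (0:ℝ), p.eval x * w lam N s x

lemma sq_int_pos (lam : ℝ) (hlam : -1 < lam) (N : ℕ) (hN : 1 ≤ N) {s : ℝ}
    (hs : s ∈ Set.Icc (0:ℝ) 1) {p : Polynomial ℝ} (hp : p ≠ 0) :
    0 < J lam N s (p*p) := by
  rw [J]
  set f : ℝ → ℝ := fun x => (p*p).eval x * w lam N s x with hf
  have hnonneg : 0 ≤ᶠ[ae (volume.restrict (Set.Ioi (0:ℝ)))] f := by
    rw [Filter.EventuallyLE, ae_restrict_iff' measurableSet_Ioi]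
    filter_upwards with x hx
    have hx' : (0:ℝ) < x := hx
    have : (0:ℝ) ≤ x ^ lam := Real.rpow_nonneg hx'.le lam
    simp only [hf, eval_mul, w, Pi.zero_apply]
    exact mul_nonneg (mul_self_nonneg _) (by positivity)
  rw [(setIntegral_pos_iff_support_of_nonneg_ae hnonneg
    (integrable_poly_w lam hlam N hN hs (p*p)))]
  have hZ : {x : ℝ | p.IsRoot x}.Finite := Polynomial.finite_setOf_isRoot hp
  have hsub : Set.Ioi (0:ℝ) \ {x : ℝ | p.IsRoot x} ⊆ Function.support f ∩ Set.Ioi 0 := by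
    intro x hx
    obtain ⟨hx1, hx2⟩ := hx
    refine ⟨?_, hx1⟩
    have hx' : (0:ℝ) < x := hx1
    have h1 : (0:ℝ) < x ^ lam := Real.rpow_pos_of_pos hx' lam
    have h2 : (0:ℝ) < Real.exp (-(N:ℝ) * (x + s * (x^2 - x))) := Real.exp_pos _
    have h3 : p.eval x ≠ 0 := hx2
    simp only [Function.mem_support, hf, eval_mul, w]
    positivity
  calc (0:ENNReal) < volume (Set.Ioi (0:ℝ) \ {x : ℝ | p.IsRoot x}) := by
        rw [measure_diff_null (hZ.measure_zero _)]
        simp [Real.volume_Ioi]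
    _ ≤ volume (Function.support f ∩ Set.Ioi 0) := measure_mono hsub

lemma J_add (lam : ℝ) (hlam : -1 < lam) (N : ℕ) (hN : 1 ≤ N) {s : ℝ}
    (hs : s ∈ Set.Icc (0:ℝ) 1) (p q : Polynomial ℝ) :
    J lam N s (p + q) = J lam N s p + J lam N s q := by
  unfold J
  simp_rw [eval_add, add_mul]
  exact integral_add (integrable_poly_w lam hlam N hN hs p) (integrable_poly_w lam hlam N hN hs q)

lemma J_sub (lam : ℝ) (hlam : -1 < lam) (N : ℕ) (hN : 1 ≤ N) {s : ℝ}
    (hs : s ∈ Set.Icc (0:ℝ) 1) (p q : Polynomial ℝ) :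
    J lam N s (p - q) = J lam N s p - J lam N s q := by
  unfold J
  simp_rw [eval_sub, sub_mul]
  exact integral_sub (integrable_poly_w lam hlam N hN hs p) (integrable_poly_w lam hlam N hN hs q)

lemma J_C (lam : ℝ) (N : ℕ) (s : ℝ) (a : ℝ) (p : Polynomial ℝ) :
    J lam N s (C a * p) = a * J lam N s p := by
  unfold J
  simp_rw [eval_mul, eval_C, mul_assoc]
  exact integral_const_mul a _

lemma J_zero (lam : ℝ) (N : ℕ) (s : ℝ) : J lam N s 0 = 0 := by
  unfold J; simp

/-- String equations (Proposition 2.3): with `q = n/N`,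
`2s(be_{n+1} + be_n + al_n^2) + (1-s) al_n = 2q + (lam+1)/N` and
`be_n (2s al_n + 1 - s)(2s al_{n-1} + 1 - s) = (2s be_n - q)(2s be_n - q - lam/N)`. -/
theorem string_equations (lam : ℝ) (hlam : -1 < lam) (n N : ℕ) (hn : 1 ≤ n) (hN : 1 ≤ N)
    (s : ℝ) (hs : s ∈ Set.Icc (0 : ℝ) 1)
    (P : ℕ → Polynomial ℝ) (al be : ℕ → ℝ)
    (hmonic : ∀ m, (P m).Monic)
    (hdeg : ∀ m, (P m).natDegree = m)
    (horth : ∀ m k, m ≠ k →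
      ∫ x in Set.Ioi (0 : ℝ), (P m).eval x * (P k).eval x * w lam N s x = 0)
    (hrec : ∀ m : ℕ, Polynomial.X * P m =
      P (m + 1) + Polynomial.C (al m) * P m +
        Polynomial.C (be m) * (if m = 0 then 0 else P (m - 1))) :
    2 * s * (be (n + 1) + be n + (al n) ^ 2) + (1 - s) * al n
        = 2 * ((n : ℝ) / N) + (lam + 1) / N ∧
    be n * (2 * s * al n + 1 - s) * (2 * s * al (n - 1) + 1 - s)
        = (2 * s * be n - (n : ℝ) / N) * (2 * s * be n - (n : ℝ) / N - lam / N) := by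

  have hNne : (N:ℝ) ≠ 0 := Nat.cast_ne_zero.2 (by omega)
  have Jadd := J_add lam hlam N hN hs
  have Jsub := J_sub lam hlam N hN hs
  have JCm := J_C lam N s
  have JstarJ : ∀ p : Polynomial ℝ, J lam N s (X * derivative p + C (lam+1) * p
      - C ((N:ℝ)*(1-s)) * (X*p) - C (2*(N:ℝ)*s) * (X^2*p)) = 0 :=
    fun p => star_id lam hlam N hN hs p
  have JPP : ∀ m k, m ≠ k → J lam N s (P m * P k) = 0 := by
    intro m k hmk
    unfold J
    simp_rw [eval_mul]
    exact horth m k hmk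
  have hpos : ∀ m, 0 < J lam N s (P m * P m) := fun m =>
    sq_int_pos lam hlam N hN hs (hmonic m).ne_zero
  have hP0 : P 0 = 1 := ((hmonic 0).natDegree_eq_zero).mp (hdeg 0)
  have hc1 : ∀ m, (P m).coeff m = 1 := by
    intro m
    have h := hmonic m
    rwa [Polynomial.Monic, Polynomial.leadingCoeff, hdeg m] at h
  have hcz : ∀ m k, m < k → (P m).coeff k = 0 := fun m k h =>
    Polynomial.coeff_eq_zero_of_natDegree_lt (by rw [hdeg]; exact h)
  have Jorth : ∀ m (Q : Polynomial ℝ), (∀ k, m ≤ k → Q.coeff k = 0) →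
      J lam N s (Q * P m) = 0 := by
    have key : ∀ d m (Q : Polynomial ℝ), Q.natDegree ≤ d → (∀ k, m ≤ k → Q.coeff k = 0) →
        J lam N s (Q * P m) = 0 := by
      intro d
      induction d with
      | zero =>
        intro m Q hQd hQc
        rcases Nat.eq_zero_or_pos m with rfl | hm
        · have hQ0 : Q = 0 := by
            rw [Polynomial.eq_C_of_natDegree_le_zero hQd, hQc 0 le_rfl, map_zero]
          rw [hQ0, zero_mul, J_zero]
        · rw [Polynomial.eq_C_of_natDegree_le_zero hQd]
          rw [show C (Q.coeff 0) * P m = C (Q.coeff 0) * (P 0 * P m) by rw [hP0, one_mul]]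
          rw [JCm, JPP 0 m (by omega), mul_zero]
      | succ d ih =>
        intro m Q hQd hQc
        by_cases hle : Q.natDegree ≤ d
        · exact ih m Q hle hQc
        · have hQne : Q ≠ 0 := by
            intro h; rw [h] at hle; simp at hle
          have hQe : Q.natDegree = d + 1 := le_antisymm hQd (by omega)
          have hem : d + 1 < m := by
            by_contra hcon
            have h0 := hQc (d+1) (by omega)
            have hlc : Q.leadingCoeff = 0 := by rwa [Polynomial.leadingCoeff, hQe]
            exact hQne (Polynomial.leadingCoeff_eq_zero.mp hlc)
          have hRd : (Q - C (Q.coeff (d+1)) * P (d+1)).natDegree ≤ d := by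
            rw [Polynomial.natDegree_le_iff_coeff_eq_zero]
            intro k hk
            rw [Polynomial.coeff_sub, Polynomial.coeff_C_mul]
            rcases eq_or_lt_of_le (Nat.succ_le_of_lt hk) with he | hgt
            · rw [← he, hc1 (d+1), mul_one, sub_self]
            · rw [Polynomial.coeff_eq_zero_of_natDegree_lt (hQe ▸ hgt),
                hcz (d+1) k hgt, mul_zero, sub_zero]
          have hRc : ∀ k, m ≤ k → (Q - C (Q.coeff (d+1)) * P (d+1)).coeff k = 0 := by
            intro k hk
            rw [Polynomial.coeff_sub, Polynomial.coeff_C_mul, hQc k hk,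
              hcz (d+1) k (by omega), mul_zero, sub_zero]
          have hsplit : Q * P m = (Q - C (Q.coeff (d+1)) * P (d+1)) * P m
              + C (Q.coeff (d+1)) * (P (d+1) * P m) := by ring
          rw [hsplit, Jadd, JCm, ih m _ hRd hRc, JPP (d+1) m (by omega), mul_zero, add_zero]
    exact fun m Q => key Q.natDegree m Q le_rfl
  have hrec0 : X * P 0 = P 1 + C (al 0) * P 0 := by
    have h := hrec 0; simpa using h
  have hrecS : ∀ m, X * P (m+1) = P (m+2) + C (al (m+1)) * P (m+1) + C (be (m+1)) * P m := by
    intro m; have h := hrec (m+1); simpa using h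
  -- bilinear expansion helper
  have Jexp : ∀ (A B D E F G : Polynomial ℝ) (a b c d : ℝ),
      J lam N s ((A + C a * B + C b * D) * (E + C c * F + C d * G))
        = J lam N s (A*E) + c * J lam N s (A*F) + d * J lam N s (A*G)
          + a * J lam N s (B*E) + a*(c * J lam N s (B*F)) + a*(d * J lam N s (B*G))
          + b * J lam N s (D*E) + b*(c * J lam N s (D*F)) + b*(d * J lam N s (D*G)) := by
    intro A B D E F G a b c d
    rw [show (A + C a * B + C b * D) * (E + C c * F + C d * G)
      = A*E + C c * (A*F) + C d * (A*G) + C a * (B*E) + C a * (C c * (B*F))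
        + C a * (C d * (B*G)) + C b * (D*E) + C b * (C c * (D*F)) + C b * (C d * (D*G)) by ring]
    simp only [Jadd, JCm]
  have Jz1 : ∀ p : Polynomial ℝ, J lam N s (0 * p) = 0 := by
    intro p; rw [zero_mul, J_zero]
  have Jz2 : ∀ p : Polynomial ℝ, J lam N s (p * 0) = 0 := by
    intro p; rw [mul_zero, J_zero]
  have hXPK : ∀ m k, J lam N s (X * P m * P k) = J lam N s (P (m+1) * P k)
      + al m * J lam N s (P m * P k)
      + (if m = 0 then 0 else be m * J lam N s (P (m-1) * P k)) := by
    intro m k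
    rcases m with _ | j
    · rw [show X * P 0 * P k = (P 1 + C (al 0) * P 0) * P k by rw [hrec0]]
      rw [show (P 1 + C (al 0) * P 0) * P k = P 1 * P k + C (al 0) * (P 0 * P k) by ring]
      rw [Jadd, JCm]
      simp
    · rw [show X * P (j+1) * P k = (P (j+2) + C (al (j+1)) * P (j+1) + C (be (j+1)) * P j) * P k
        by rw [hrecS j]]
      rw [show (P (j+2) + C (al (j+1)) * P (j+1) + C (be (j+1)) * P j) * P k
        = P (j+2) * P k + C (al (j+1)) * (P (j+1) * P k) + C (be (j+1)) * (P j * P k) by ring]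
      rw [Jadd, Jadd, JCm, JCm]
      simp
  have V2 : ∀ m, J lam N s (X * P (m+1) * P m) = be (m+1) * J lam N s (P m * P m) := by
    intro m
    rw [hXPK (m+1) m, JPP (m+2) m (by omega), JPP (m+1) m (by omega)]
    simp
  have Vb : ∀ m, J lam N s (P (m+1) * P (m+1)) = be (m+1) * J lam N s (P m * P m) := by
    intro m
    have h2 : J lam N s (X * P m * P (m+1)) = J lam N s (P (m+1) * P (m+1)) := by
      rw [hXPK m (m+1), JPP m (m+1) (by omega)]
      rcases m with _ | j
      · simp
      · rw [if_neg (by omega)]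
        simp [JPP j (j+2) (by omega)]
    calc J lam N s (P (m+1) * P (m+1)) = J lam N s (X * P m * P (m+1)) := h2.symm
      _ = J lam N s (X * P (m+1) * P m) := by
          rw [show X * P m * P (m+1) = X * P (m+1) * P m by ring]
      _ = be (m+1) * J lam N s (P m * P m) := V2 m
  have V1 : ∀ m, J lam N s (X * P m * P m) = al m * J lam N s (P m * P m) := by
    intro m
    rw [hXPK m m, JPP (m+1) m (by omega)]
    rcases m with _ | j
    · simp
    · rw [if_neg (by omega)]
      simp [JPP j (j+1) (by omega)]
  have V3 : ∀ m, J lam N s (X^2 * P m * P m)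
      = (be (m+1) + al m^2 + (if m = 0 then 0 else be m)) * J lam N s (P m * P m) := by
    intro m
    rcases m with _ | j
    · rw [show X^2 * P 0 * P 0 = (X * P 0) * (X * P 0) by ring, hrec0]
      rw [show P 1 + C (al 0) * P 0 = P 1 + C (al 0) * P 0 + C 0 * 0 by simp]
      rw [Jexp]
      rw [JPP 0 1 (by omega), JPP 1 0 (by omega), Vb 0]
      simp
      ring
    · rw [show X^2 * P (j+1) * P (j+1) = (X * P (j+1)) * (X * P (j+1)) by ring, hrecS j]
      rw [Jexp]
      rw [JPP (j+2) (j+1) (by omega), JPP (j+2) j (by omega), JPP (j+1) (j+2) (by omega),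
        JPP (j+1) j (by omega), JPP j (j+2) (by omega), JPP j (j+1) (by omega),
        Vb (j+1), Vb j]
      rw [if_neg (by omega)]
      ring
  have V4 : ∀ m, J lam N s (X^2 * P (m+1) * P m)
      = (al (m+1) + al m) * (be (m+1) * J lam N s (P m * P m)) := by
    intro m
    rcases m with _ | j
    · rw [show X^2 * P 1 * P 0 = (X * P 1) * (X * P 0) by ring, hrecS 0, hrec0]
      rw [show P 1 + C (al 0) * P 0 = P 1 + C (al 0) * P 0 + C 0 * 0 by simp]
      rw [Jexp]
      rw [JPP 2 1 (by omega), JPP 2 0 (by omega), JPP 1 0 (by omega), JPP 0 1 (by omega), Vb 0]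
      simp
      ring
    · rw [show X^2 * P (j+2) * P (j+1) = (X * P (j+2)) * (X * P (j+1)) by ring,
        hrecS (j+1), hrecS j]
      rw [Jexp]
      rw [JPP (j+3) (j+2) (by omega), JPP (j+3) (j+1) (by omega), JPP (j+3) j (by omega),
        JPP (j+2) (j+1) (by omega), JPP (j+2) j (by omega),
        JPP (j+1) (j+2) (by omega), JPP (j+1) j (by omega), Vb (j+1)]
      ring
  have hXd : ∀ (r : Polynomial ℝ) (k : ℕ), (X * derivative r).coeff k = k * r.coeff k := by
    intro r k
    cases k with
    | zero => simp
    | succ k =>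
      rw [Polynomial.coeff_X_mul, Polynomial.coeff_derivative]
      push_cast
      ring
  have V5 : ∀ m, J lam N s (X * derivative (P m) * P m)
      = (m:ℝ) * J lam N s (P m * P m) := by
    intro m
    have hcond : ∀ k, m ≤ k → (X * derivative (P m) - C (m:ℝ) * P m).coeff k = 0 := by
      intro k hk
      rw [Polynomial.coeff_sub, hXd, Polynomial.coeff_C_mul]
      rcases eq_or_lt_of_le hk with rfl | h
      · ring
      · rw [hcz m k h]; ring
    have h := Jorth m _ hcond
    rw [show (X * derivative (P m) - C (m:ℝ) * P m) * P m
      = X * derivative (P m) * P m - C (m:ℝ) * (P m * P m) by ring, Jsub, JCm] at h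
    linarith
  have V7 : ∀ m, J lam N s (X * derivative (P m) * P (m+1)) = 0 := by
    intro m
    apply Jorth (m+1)
    intro k hk
    rw [hXd, hcz m k (by omega)]
    ring
  have V6 : ∀ m, J lam N s (X * derivative (P (m+1)) * P m)
      = -((P (m+1)).coeff m * J lam N s (P m * P m)) := by
    intro m
    have hcond : ∀ k, m ≤ k → (X * derivative (P (m+1)) - C ((m:ℝ)+1) * P (m+1)
        + C ((P (m+1)).coeff m) * P m).coeff k = 0 := by
      intro k hk
      rw [Polynomial.coeff_add, Polynomial.coeff_sub, hXd,
        Polynomial.coeff_C_mul, Polynomial.coeff_C_mul]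
      rcases eq_or_lt_of_le hk with rfl | h1
      · rw [hc1]
        ring
      · rcases eq_or_lt_of_le (Nat.succ_le_of_lt h1) with he | h2
        · rw [← he, hc1 (m+1), hcz m (m+1) (Nat.lt_succ_self m)]
          push_cast
          ring
        · rw [hcz (m+1) k h2, hcz m k (by omega)]
          ring
    have h := Jorth m _ hcond
    rw [show (X * derivative (P (m+1)) - C ((m:ℝ)+1) * P (m+1)
        + C ((P (m+1)).coeff m) * P m) * P m
      = X * derivative (P (m+1)) * P m - C ((m:ℝ)+1) * (P (m+1) * P m)
        + C ((P (m+1)).coeff m) * (P m * P m) by ring] at h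
    rw [Jadd, Jsub, JCm, JCm, JPP (m+1) m (by omega)] at h
    linarith
  have hb0 : (P 1).coeff 0 = -(al 0) := by
    have h := congrArg (fun p : Polynomial ℝ => p.coeff 0) hrec0
    simp only [Polynomial.mul_coeff_zero, Polynomial.coeff_X_zero, Polynomial.coeff_add,
      Polynomial.coeff_C_mul, Polynomial.coeff_C_zero, hc1 0, zero_mul, mul_one] at h
    linarith
  have hbrec : ∀ m, (P (m+2)).coeff (m+1) = (P (m+1)).coeff m - al (m+1) := by
    intro m
    have h := congrArg (fun p : Polynomial ℝ => p.coeff (m+1)) (hrecS m)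
    simp only [Polynomial.coeff_X_mul, Polynomial.coeff_add, Polynomial.coeff_C_mul,
      hc1 (m+1), hcz m (m+1) (by omega), mul_one, mul_zero, add_zero] at h
    linarith
  -- string equation (first kind), star applied to (P m)^2
  have CstarE : ∀ m : ℕ, 2*((m:ℝ) * J lam N s (P m * P m)) + (lam+1) * J lam N s (P m * P m)
      - (N:ℝ)*(1-s) * (al m * J lam N s (P m * P m))
      - 2*(N:ℝ)*s * ((be (m+1) + al m^2 + (if m = 0 then 0 else be m))
          * J lam N s (P m * P m)) = 0 := by
    intro m
    have h := JstarJ (P m * P m)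
    rw [show X * derivative (P m * P m) + C (lam+1) * (P m * P m)
        - C ((N:ℝ)*(1-s)) * (X*(P m * P m)) - C (2*(N:ℝ)*s) * (X^2*(P m * P m))
      = (X * derivative (P m) * P m + X * derivative (P m) * P m
          + C (lam+1) * (P m * P m)) - C ((N:ℝ)*(1-s)) * (X * P m * P m)
          - C (2*(N:ℝ)*s) * (X^2 * P m * P m) by rw [derivative_mul]; ring] at h
    rw [Jsub, Jsub, Jadd, Jadd, JCm, JCm, JCm, V5 m, V1 m, V3 m] at h
    linarith
  have C0 : 2*(N:ℝ)*s * be 1 + al 0 * (2*(N:ℝ)*s * al 0 + (N:ℝ)*(1-s)) = lam + 1 := by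
    have h := CstarE 0
    rw [if_pos rfl] at h
    apply mul_right_cancel₀ (ne_of_gt (hpos 0))
    push_cast at h
    linear_combination -h
  have CS : ∀ m, 2*(N:ℝ)*s * (be (m+2) + be (m+1))
      + al (m+1) * (2*(N:ℝ)*s * al (m+1) + (N:ℝ)*(1-s)) = 2*((m:ℝ)+1) + lam + 1 := by
    intro m
    have h := CstarE (m+1)
    rw [if_neg (by omega)] at h
    apply mul_right_cancel₀ (ne_of_gt (hpos (m+1)))
    push_cast at h
    linear_combination -h
  -- star applied to P (m+1) * P m
  have AS : ∀ m, (P (m+1)).coeff m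
      = -(be (m+1) * (2*(N:ℝ)*s * (al (m+1) + al m) + (N:ℝ)*(1-s))) := by
    intro m
    have h := JstarJ (P (m+1) * P m)
    rw [show X * derivative (P (m+1) * P m) + C (lam+1) * (P (m+1) * P m)
        - C ((N:ℝ)*(1-s)) * (X*(P (m+1) * P m)) - C (2*(N:ℝ)*s) * (X^2*(P (m+1) * P m))
      = (X * derivative (P (m+1)) * P m + X * derivative (P m) * P (m+1)
          + C (lam+1) * (P (m+1) * P m)) - C ((N:ℝ)*(1-s)) * (X * P (m+1) * P m)
          - C (2*(N:ℝ)*s) * (X^2 * P (m+1) * P m) by rw [derivative_mul]; ring] at h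
    rw [Jsub, Jsub, Jadd, Jadd, JCm, JCm, JCm, V6 m, V7 m, V2 m, V4 m,
      JPP (m+1) m (by omega)] at h
    apply mul_right_cancel₀ (ne_of_gt (hpos m))
    linear_combination -h
  -- second string equation by induction
  have T : ∀ m, (2*(N:ℝ)*s)^2 * be (m+1) * al (m+1) * al m
      - (N:ℝ)*(1-s) * (P (m+1)).coeff m
      = (2*(N:ℝ)*s)^2 * be (m+1)^2 - (2*((m:ℝ)+1)+lam) * (2*(N:ℝ)*s) * be (m+1)
        + ((m:ℝ)+1)*(((m:ℝ)+1)+lam) := by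
    intro m
    induction m with
    | zero =>
      have hF0 : be 1 * (2*(N:ℝ)*s * (al 1 + al 0) + (N:ℝ)*(1-s)) = al 0 := by
        linear_combination (AS 0) - hb0
      push_cast
      linear_combination (al 0 * (2*(N:ℝ)*s)) * hF0 + (1 - 2*(N:ℝ)*s * be 1) * C0
        - ((N:ℝ)*(1-s)) * hb0
    | succ m ih =>
      have hFn : be (m+2) * (2*(N:ℝ)*s * (al (m+2) + al (m+1)) + (N:ℝ)*(1-s))
          - be (m+1) * (2*(N:ℝ)*s * (al (m+1) + al m) + (N:ℝ)*(1-s)) = al (m+1) := by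
        linear_combination (AS (m+1)) - (AS m) - hbrec m
      push_cast
      push_cast at ih
      linear_combination ih + (1 + 2*(N:ℝ)*s * (be (m+1) - be (m+2))) * (CS m)
        + (2*(N:ℝ)*s * al (m+1)) * hFn - ((N:ℝ)*(1-s)) * (hbrec m)
  obtain ⟨k, rfl⟩ : ∃ k, n = k + 1 := ⟨n - 1, by omega⟩
  constructor
  · have h := CS k
    rw [show (2:ℝ) * (↑(k+1) / ↑N) + (lam + 1) / ↑N = (2*((k:ℝ)+1) + lam + 1)/N by
      field_simp; push_cast; ring]
    rw [eq_div_iff hNne]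
    linear_combination h
  · have h := T k
    have hA := AS k
    rw [show ((k:ℕ)+1) - 1 = k from rfl]
    rw [show (2*s*be (k+1) - (↑(k+1):ℝ)/N) * (2*s*be (k+1) - (↑(k+1):ℝ)/N - lam/N)
      = ((2*(N:ℝ)*s*be (k+1) - (↑(k+1):ℝ)) * (2*(N:ℝ)*s*be (k+1) - (↑(k+1):ℝ) - lam))/(N*N) by
      field_simp]
    rw [eq_div_iff (mul_ne_zero hNne hNne)]
    push_cast
    push_cast at h
    linear_combination h + ((N:ℝ)*(1-s)) * hA
end

section
/- Fix s ∈ (0,1] and set D = √(s^2 + 22s + 1), c = (s − 1 + D)/(3s), a = −s, b = (2s − 2 − D)/6, and ψ(x) = −(1/π)(a x + b)√((c − x)/x) for x ∈ (0,c). Then ψ(x) > 0 for every x ∈ (0,c) and ∫_0^c ψ(x) dx = 1; i.e. ψ is a probability density on (0,c). -/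
open MeasureTheory Real

/-- `Δ(s) = √(s² + 22s + 1)`. -/
noncomputable def Dlt (s : ℝ) : ℝ := Real.sqrt (s ^ 2 + 22 * s + 1)

/-- Right endpoint `c = (s - 1 + Δ)/(3s)` of the support of the equilibrium measure. -/
noncomputable def cEnd (s : ℝ) : ℝ := (s - 1 + Dlt s) / (3 * s)

/-- Density of the equilibrium measure:
`ψ(x) = -(1/π)(a x + b)√((c - x)/x)` with `a = -s`, `b = (2s - 2 - Δ)/6`. -/
noncomputable def psi (s x : ℝ) : ℝ :=
  -(1 / Real.pi) * (-s * x + (2 * s - 2 - Dlt s) / 6) * Real.sqrt ((cEnd s - x) / x)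

/-- Antiderivative of `ψ` (with parameters `b`, `c` abstract). -/
noncomputable def Fant (s b c x : ℝ) : ℝ :=
  -(1 / Real.pi) * ((-s * x / 2 + b + s * c / 4) * Real.sqrt (x * (c - x)) +
    (b * c - s * c ^ 2 / 4) * Real.arcsin (Real.sqrt (x / c)))

lemma Fant_continuous (s b c : ℝ) : Continuous (Fant s b c) := by
  unfold Fant
  continuity

lemma Fant_hasDerivAt (s b c x : ℝ) (hx0 : 0 < x) (hxc : x < c) :
    HasDerivAt (Fant s b c)
      (-(1 / Real.pi) * (-s * x + b) * Real.sqrt ((c - x) / x)) x := by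
  have hc : 0 < c := hx0.trans hxc
  have hcx : 0 < c - x := by linarith
  set u := Real.sqrt x with hu
  set v := Real.sqrt (c - x) with hv
  set w := Real.sqrt c with hw
  have hu0 : 0 < u := Real.sqrt_pos.mpr hx0
  have hv0 : 0 < v := Real.sqrt_pos.mpr hcx
  have hw0 : 0 < w := Real.sqrt_pos.mpr hc
  have hu2 : u ^ 2 = x := Real.sq_sqrt hx0.le
  have hv2 : v ^ 2 = c - x := Real.sq_sqrt hcx.le
  have hw2 : w ^ 2 = c := Real.sq_sqrt hc.le
  have hq : HasDerivAt (fun y : ℝ => y * (c - y)) (c - 2 * x) x := by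
    have h := (hasDerivAt_id x).mul ((hasDerivAt_const x c).sub (hasDerivAt_id x))
    refine h.congr_deriv (Eq.symm ?_)
    simp; ring
  have hsq : HasDerivAt (fun y => Real.sqrt (y * (c - y)))
      ((c - 2 * x) * (1 / (2 * (u * v)))) x := by
    have hne : x * (c - x) ≠ 0 := by positivity
    have h := (Real.hasDerivAt_sqrt hne).comp x hq
    refine h.congr_deriv (Eq.symm ?_)
    rw [Real.sqrt_mul hx0.le, ← hu, ← hv]
    ring
  have hdiv : HasDerivAt (fun y : ℝ => y / c) (1 / c) x := by
    simpa using (hasDerivAt_id x).div_const c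
  have harg : Real.sqrt (x / c) = u / w := by rw [Real.sqrt_div hx0.le, ← hu, ← hw]
  have hsq2 : HasDerivAt (fun y => Real.sqrt (y / c)) (1 / (2 * (u / w)) * (1 / c)) x := by
    have hne : x / c ≠ 0 := (div_pos hx0 hc).ne'
    have h := (Real.hasDerivAt_sqrt hne).comp x hdiv
    refine h.congr_deriv (Eq.symm ?_)
    rw [harg]
  have h1 : Real.sqrt (x / c) ≠ -1 :=
    ne_of_gt (lt_of_lt_of_le (by norm_num) (Real.sqrt_nonneg _))
  have h2 : Real.sqrt (x / c) ≠ 1 := by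
    refine ne_of_lt ((Real.sqrt_lt' one_pos).mpr ?_)
    rw [one_pow]
    exact (div_lt_one hc).mpr hxc
  have harc : HasDerivAt (fun y => Real.arcsin (Real.sqrt (y / c)))
      (1 / (2 * (u * v))) x := by
    have h := (Real.hasDerivAt_arcsin h1 h2).comp x hsq2
    refine h.congr_deriv (Eq.symm ?_)
    rw [harg]
    have e4 : 1 - (u / w) ^ 2 = (c - x) / c := by
      rw [div_pow, hu2, hw2]
      field_simp
    rw [e4, Real.sqrt_div hcx.le, ← hv, ← hw, ← hw2]
    field_simp
  have hlin : HasDerivAt (fun y : ℝ => -s * y / 2 + b + s * c / 4) (-s / 2) x := by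
    have h := ((((hasDerivAt_id x).const_mul (-s)).div_const 2).add_const b).add_const
      (s * c / 4)
    refine h.congr_deriv (Eq.symm ?_)
    ring
  have htot := ((hlin.mul hsq).add
    ((harc.const_mul (b * c - s * c ^ 2 / 4)))).const_mul (-(1 / Real.pi))
  have heq : Fant s b c = fun y => -(1 / Real.pi) *
      ((-s * y / 2 + b + s * c / 4) * Real.sqrt (y * (c - y)) +
        (b * c - s * c ^ 2 / 4) * Real.arcsin (Real.sqrt (y / c))) := rfl
  rw [heq]
  refine htot.congr_deriv (Eq.symm ?_)
  rw [Real.sqrt_div hcx.le, Real.sqrt_mul hx0.le, ← hu, ← hv]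
  rw [← hu2, ← hw2]
  have hcx' : w ^ 2 - u ^ 2 = v ^ 2 := by rw [hu2, hw2, hv2]
  rw [show w ^ 2 = v ^ 2 + u ^ 2 by rw [hw2, hv2, hu2]; ring]
  field_simp
  ring

lemma Dlt_sq (s : ℝ) (hs : 0 < s) : Dlt s ^ 2 = s ^ 2 + 22 * s + 1 :=
  Real.sq_sqrt (by nlinarith)

lemma Dlt_pos (s : ℝ) (hs : 0 < s) : 0 < Dlt s := Real.sqrt_pos.mpr (by nlinarith)

lemma Dlt_gt (s : ℝ) (hs : 0 < s) : 1 - s < Dlt s := by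
  nlinarith [Dlt_sq s hs, Dlt_pos s hs]

lemma cEnd_pos (s : ℝ) (hs : 0 < s) : 0 < cEnd s :=
  div_pos (by linarith [Dlt_gt s hs]) (by linarith)

lemma c_rel (s : ℝ) (hs : 0 < s) : 3 * s * cEnd s = s - 1 + Dlt s := by
  unfold cEnd
  field_simp

lemma Kval (s : ℝ) (hs : 0 < s) :
    (2 * s - 2 - Dlt s) / 6 * cEnd s - s * cEnd s ^ 2 / 4 = -2 := by
  have hD2 := Dlt_sq s hs
  have hs' : s ≠ 0 := ne_of_gt hs
  rw [show cEnd s = (s - 1 + Dlt s) / (3 * s) from rfl]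
  field_simp
  ring_nf
  linear_combination (-18) * hD2

lemma psi_integrable (s : ℝ) (hs0 : 0 < s) : IntervalIntegrable (psi s) volume 0 (cEnd s) := by
  have hc : 0 < cEnd s := cEnd_pos s hs0
  have hg : IntervalIntegrable
      (fun x : ℝ => (1 / Real.pi) * (s * cEnd s + |(2 * s - 2 - Dlt s) / 6|) *
        Real.sqrt (cEnd s) * x ^ (-(1 / 2) : ℝ)) volume 0 (cEnd s) := by
    simpa [mul_comm] using (intervalIntegral.intervalIntegrable_rpow' (a := 0) (b := cEnd s)
      (r := -(1/2)) (by norm_num)).const_mul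
      ((1 / Real.pi) * (s * cEnd s + |(2 * s - 2 - Dlt s) / 6|) * Real.sqrt (cEnd s))
  refine IntervalIntegrable.mono_fun' hg ?_ ?_
  · apply Measurable.aestronglyMeasurable
    unfold psi
    fun_prop
  · rw [Set.uIoc_of_le hc.le]
    filter_upwards [ae_restrict_mem measurableSet_Ioc] with x hx
    obtain ⟨hx0, hxc⟩ := hx
    have hsx0 : 0 < Real.sqrt x := Real.sqrt_pos.mpr hx0
    have hsplit : Real.sqrt ((cEnd s - x) / x) = Real.sqrt (cEnd s - x) / Real.sqrt x :=
      Real.sqrt_div (by linarith) x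
    have hxpow : (x : ℝ) ^ (-(1 / 2) : ℝ) = (Real.sqrt x)⁻¹ := by
      rw [Real.rpow_neg hx0.le, Real.sqrt_eq_rpow]
    unfold psi
    rw [Real.norm_eq_abs, abs_mul, abs_mul, hsplit, hxpow]
    rw [abs_of_nonneg (by positivity : (0:ℝ) ≤ Real.sqrt (cEnd s - x) / Real.sqrt x)]
    rw [show |(-(1 / Real.pi))| = 1 / Real.pi by
      rw [abs_neg, abs_of_nonneg (by positivity)]]
    rw [div_eq_mul_inv (Real.sqrt (cEnd s - x))]
    rw [show (1 / Real.pi) * (s * cEnd s + |(2 * s - 2 - Dlt s) / 6|) *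
        Real.sqrt (cEnd s) * (Real.sqrt x)⁻¹ =
        (1 / Real.pi) * ((s * cEnd s + |(2 * s - 2 - Dlt s) / 6|) *
          (Real.sqrt (cEnd s) * (Real.sqrt x)⁻¹)) by ring, mul_assoc]
    gcongr
    · refine (abs_add_le _ _).trans ?_
      have h1 : |(-s * x)| = s * x := by
        rw [abs_mul, abs_neg, abs_of_nonneg hs0.le, abs_of_nonneg hx0.le]
      have h2 : s * x ≤ s * cEnd s := mul_le_mul_of_nonneg_left hxc hs0.le
      linarith
    · linarith

/-- The equilibrium density `ψ` is positive on `(0,c)` and integrates to 1. -/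
theorem equilibrium_density_is_probability_density (s : ℝ) (hs : s ∈ Set.Ioc (0 : ℝ) 1) :
    (∀ x ∈ Set.Ioo (0 : ℝ) (cEnd s), 0 < psi s x) ∧
    ∫ x in Set.Ioo (0 : ℝ) (cEnd s), psi s x = 1 := by
  obtain ⟨hs0, hs1⟩ := hs
  have hc : 0 < cEnd s := cEnd_pos s hs0
  constructor
  · rintro x ⟨hx0, hxc⟩
    have hD := Dlt_pos s hs0
    unfold psi
    have h1 : -s * x + (2 * s - 2 - Dlt s) / 6 < 0 := by nlinarith
    have h2 : 0 < Real.sqrt ((cEnd s - x) / x) :=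
      Real.sqrt_pos.mpr (div_pos (by linarith) hx0)
    have h3 : -(1 / Real.pi) < 0 := by
      have h4 : (0:ℝ) < 1 / Real.pi := by positivity
      linarith
    exact mul_pos (mul_pos_of_neg_of_neg h3 h1) h2
  · rw [← integral_Ioc_eq_integral_Ioo, ← intervalIntegral.integral_of_le hc.le]
    unfold psi
    rw [intervalIntegral.integral_eq_sub_of_hasDerivAt_of_le hc.le
      (Fant_continuous s ((2 * s - 2 - Dlt s) / 6) (cEnd s)).continuousOn
      (fun x hx => Fant_hasDerivAt s ((2 * s - 2 - Dlt s) / 6) (cEnd s) x hx.1 hx.2)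
      (psi_integrable s hs0)]
    have h0 : Fant s ((2 * s - 2 - Dlt s) / 6) (cEnd s) 0 = 0 := by
      unfold Fant; simp
    have h1 : Fant s ((2 * s - 2 - Dlt s) / 6) (cEnd s) (cEnd s) =
        -((2 * s - 2 - Dlt s) / 6 * cEnd s - s * cEnd s ^ 2 / 4) / 2 := by
      unfold Fant
      rw [sub_self, mul_zero, Real.sqrt_zero, div_self hc.ne', Real.sqrt_one, Real.arcsin_one]
      have hpi := Real.pi_ne_zero
      field_simp
      ring
    rw [h0, h1, Kval s hs0]
    norm_num
end

section
/- Fix s ∈ (0,1] and set D = √(s^2 + 22s + 1), c = (s − 1 + D)/(3s), a = −s, b = (2s − 2 − D)/6, and ψ(x) = −(1/π)(a x + b)√((c − x)/x) for x ∈ (0,c). Then for every real z > c, the Stieltjes transform satisfies ∫_0^c ψ(x)/(z − x) dx = (1 + s(2z − 1))/2 + (a z + b)√((z − c)/z). -/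
open MeasureTheory Real Filter Set Topology

set_option maxHeartbeats 2000000 in
lemma stieltjes_key (a b c z : ℝ) (hc : 0 < c) (hzc : c < z) :
    ∫ x in Set.Ioo (0:ℝ) c, (-(1/Real.pi) * (a * x + b) * Real.sqrt ((c - x)/x)) / (z - x)
      = a*c/2 - (a*z+b) + (a*z+b) * Real.sqrt ((z-c)/z) := by
  have hz0 : 0 < z := hc.trans hzc
  have hw : 0 < z - c := by linarith
  have hpi : (0:ℝ) < Real.pi := Real.pi_pos
  have hden : ∀ t : ℝ, (0:ℝ) < 1 + t ^ 2 := fun t => by positivity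
  have hden2 : ∀ t : ℝ, (0:ℝ) < z * t ^ 2 + (z - c) := fun t => by positivity
  set f : ℝ → ℝ := fun t => c / (1 + t ^ 2) with hf
  have hderivf : ∀ t : ℝ, HasDerivAt f (-(2 * c * t) / (1 + t ^ 2) ^ 2) t := by
    intro t
    have h1 : HasDerivAt (fun t : ℝ => 1 + t ^ 2) (2 * t) t := by
      simpa using (hasDerivAt_pow 2 t).const_add 1
    have h2 := (hasDerivAt_const t c).div h1 (hden t).ne'
    refine h2.congr_deriv ?_
    ring
  have himg : f '' Set.Ioi 0 = Set.Ioo 0 c := by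
    ext y
    constructor
    · rintro ⟨t, ht, rfl⟩
      simp only [hf, Set.mem_Ioi] at ht ⊢
      constructor
      · positivity
      · rw [div_lt_iff₀ (hden t)]
        nlinarith [mul_pos hc (pow_pos ht 2)]
    · rintro ⟨hy0, hyc⟩
      refine ⟨Real.sqrt (c / y - 1), ?_, ?_⟩
      · have h1 : 1 < c / y := (one_lt_div hy0).mpr hyc
        exact Set.mem_Ioi.mpr (Real.sqrt_pos.mpr (by linarith))
      · have h1 : 0 ≤ c / y - 1 := by
          have : 1 < c / y := (one_lt_div hy0).mpr hyc
          linarith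
        simp only [hf]
        rw [Real.sq_sqrt h1]
        field_simp
        ring
  have hinj : Set.InjOn f (Set.Ioi 0) := by
    intro t1 ht1 t2 ht2 h
    simp only [hf] at h
    have e : (1 + t1 ^ 2)⁻¹ = (1 + t2 ^ 2)⁻¹ := by
      have e0 : c * (1 + t1 ^ 2)⁻¹ = c * (1 + t2 ^ 2)⁻¹ := by
        simpa [div_eq_mul_inv] using h
      exact mul_left_cancel₀ hc.ne' e0
    have e2 : (1 + t1 ^ 2) = (1 + t2 ^ 2) := inv_injective e
    simp only [Set.mem_Ioi] at ht1 ht2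
    apply le_antisymm <;> nlinarith [e2, sq_nonneg (t1 - t2), sq_nonneg (t1 + t2)]
  rw [← himg, integral_image_eq_integral_abs_deriv_smul measurableSet_Ioi
      (fun t _ => (hderivf t).hasDerivWithinAt) hinj]
  set h : ℝ → ℝ := fun t =>
    (-(2*c/Real.pi)) * (t ^ 2 * (a*c + b*(1+t^2)) / ((1+t^2)^2 * (z*t^2 + (z - c)))) with hh
  have hcongr : Set.EqOn
      (fun t => |(-(2 * c * t) / (1 + t ^ 2) ^ 2)| •
        ((-(1/Real.pi) * (a * f t + b) * Real.sqrt ((c - f t)/(f t))) / (z - f t))) h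
      (Set.Ioi 0) := by
    intro t ht
    simp only [Set.mem_Ioi] at ht
    have hft : f t = c / (1 + t ^ 2) := rfl
    have e1 : (c - f t) / f t = t ^ 2 := by
      rw [hft]
      field_simp
      ring
    have e2 : Real.sqrt ((c - f t)/(f t)) = t := by
      rw [e1, Real.sqrt_sq ht.le]
    have e3 : |(-(2 * c * t) / (1 + t ^ 2) ^ 2)| = (2 * c * t) / (1 + t ^ 2) ^ 2 := by
      rw [abs_div, abs_neg, abs_of_pos (by positivity), abs_of_pos (by positivity)]
    have e4 : z - f t = (z * t ^ 2 + (z - c)) / (1 + t ^ 2) := by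
      rw [hft]; field_simp; ring
    simp only [smul_eq_mul, e2, e3, e4, hh]
    rw [hft]
    rw [div_div_eq_mul_div]
    field_simp
  rw [setIntegral_congr_fun measurableSet_Ioi hcongr]
  -- now compute ∫ t in Ioi 0, h t
  set m := Real.sqrt (z / (z - c)) with hmdef
  set r := Real.sqrt ((z - c) / z) with hrdef
  have hm : 0 < m := Real.sqrt_pos.mpr (by positivity)
  have hr : 0 < r := Real.sqrt_pos.mpr (by positivity)
  have hm2 : m ^ 2 = z / (z - c) := Real.sq_sqrt (by positivity)
  have hmr : m * r = 1 := by
    rw [hmdef, hrdef, ← Real.sqrt_mul (by positivity)]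
    rw [show z / (z - c) * ((z - c) / z) = 1 by field_simp]
    exact Real.sqrt_one
  set A : ℝ := (-(2*c/Real.pi))*(a*z+b)/c - (-(2*c/Real.pi))*a/2 with hAdef
  set B : ℝ := (-(2*c/Real.pi))*a/2 with hBdef
  set C : ℝ := -((-(2*c/Real.pi))*(a*z+b)*r/c) with hCdef
  have hCm : C * m = 2*(a*z+b)/Real.pi := by
    have e : C * m = (2*c/Real.pi)*(a*z+b)/c * (m*r) := by rw [hCdef]; ring
    rw [e, hmr, mul_one]
    field_simp
  set H : ℝ → ℝ := fun t => A * Real.arctan t + B * (t/(1+t^2)) + C * Real.arctan (m*t)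
    with hHdef
  have hderivH : ∀ t : ℝ, HasDerivAt H (h t) t := by
    intro t
    have d1 : HasDerivAt Real.arctan (1/(1+t^2)) t := Real.hasDerivAt_arctan t
    have d2 : HasDerivAt (fun t : ℝ => t/(1+t^2))
        ((1*(1+t^2) - t*(2*t))/(1+t^2)^2) t := by
      have hd : HasDerivAt (fun t : ℝ => 1 + t ^ 2) (2 * t) t := by
        simpa using (hasDerivAt_pow 2 t).const_add 1
      exact (hasDerivAt_id t).div hd (hden t).ne'
    have dmul : HasDerivAt (fun t : ℝ => m * t) m t := by
      simpa using (hasDerivAt_id t).const_mul m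
    have d3 : HasDerivAt (fun t : ℝ => Real.arctan (m*t)) ((1/(1+(m*t)^2)) * m) t :=
      (Real.hasDerivAt_arctan (m*t)).comp t dmul
    have dsum := ((d1.const_mul A).add (d2.const_mul B)).add (d3.const_mul C)
    refine dsum.congr_deriv ?_
    have e1 : 1 + (m*t)^2 = (z*t^2 + (z-c))/(z-c) := by
      rw [mul_pow, hm2]; field_simp; ring
    have e2 : C * ((1/(1+(m*t)^2)) * m) = (2*(a*z+b)/Real.pi) * ((z-c)/(z*t^2+(z-c))) := by
      calc C * ((1/(1+(m*t)^2)) * m) = (C*m) * (1/(1+(m*t)^2)) := by ring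
      _ = (2*(a*z+b)/Real.pi) * (1/((z*t^2 + (z-c))/(z-c))) := by rw [hCm, e1]
      _ = (2*(a*z+b)/Real.pi) * ((z-c)/(z*t^2+(z-c))) := by rw [one_div_div]
    rw [e2, hh, hAdef, hBdef]
    have h1 := (hden t).ne'
    have h2 := (hden2 t).ne'
    field_simp
    ring
  have hint : IntegrableOn h (Set.Ioi 0) := by
    have hcont : Continuous h := by
      apply continuous_const.mul
      apply Continuous.div
      · fun_prop
      · fun_prop
      · intro t; positivity
    set M : ℝ := (2*c/Real.pi)*((|a * c + b| + |b|)/(z-c)) with hMdef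
    apply Integrable.integrableOn
    apply Integrable.mono' (integrable_inv_one_add_sq.const_mul M)
      hcont.aestronglyMeasurable
    filter_upwards with t
    rw [Real.norm_eq_abs]
    have habs : |h t| = (2*c/Real.pi) *
        (t ^ 2 * |a*c+b*(1+t^2)| / ((1+t^2)^2 * (z*t^2 + (z - c)))) := by
      rw [hh]
      rw [abs_mul, abs_div, abs_mul, abs_neg, abs_of_pos (by positivity : (0:ℝ) < 2*c/Real.pi),
        abs_of_nonneg (sq_nonneg t), abs_of_pos (by positivity : (0:ℝ) < (1+t^2)^2 * (z*t^2+(z-c)))]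
    have key1 : |a*c + b*(1+t^2)| ≤ (|a*c+b| + |b|) * (1+t^2) := by
      rw [show a*c + b*(1+t^2) = (a*c+b) + b*t^2 by ring]
      calc |(a*c+b) + b*t^2| ≤ |a*c+b| + |b*t^2| := abs_add_le _ _
      _ = |a*c+b| + |b| * t^2 := by rw [abs_mul, abs_of_nonneg (sq_nonneg t)]
      _ ≤ (|a*c+b| + |b|) * (1+t^2) := by nlinarith [abs_nonneg (a*c+b), abs_nonneg b, sq_nonneg t]
    have key2 : (z-c)*(1+t^2) ≤ z*t^2+(z-c) := by nlinarith [sq_nonneg t]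
    calc |h t| = (2*c/Real.pi) *
        (t ^ 2 * |a*c+b*(1+t^2)| / ((1+t^2)^2 * (z*t^2 + (z - c)))) := habs
    _ ≤ (2*c/Real.pi) *
        ((|a*c+b| + |b|) * (1+t^2) * (1+t^2) / ((1+t^2)^2 * ((z-c)*(1+t^2)))) := by
      have n1 : t ^ 2 * |a*c+b*(1+t^2)| ≤ (|a*c+b| + |b|) * (1+t^2) * (1+t^2) := by
        have h5 := mul_le_mul_of_nonneg_left key1 (sq_nonneg t)
        have h4 : (0:ℝ) ≤ (|a*c+b| + |b|) * (1+t^2) := by positivity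
        nlinarith [h5, h4]
      have n2 : (1+t^2)^2 * ((z-c)*(1+t^2)) ≤ (1+t^2)^2 * (z*t^2+(z-c)) :=
        mul_le_mul_of_nonneg_left key2 (by positivity)
      have n3 : (0:ℝ) < (1+t^2)^2 * ((z-c)*(1+t^2)) := by positivity
      exact mul_le_mul_of_nonneg_left (div_le_div₀ (by positivity) n1 n3 n2) (by positivity)
    _ = M * (1+t^2)⁻¹ := by
      rw [hMdef]
      field_simp
  have ht1 : Tendsto Real.arctan atTop (𝓝 (Real.pi/2)) :=
    Real.tendsto_arctan_atTop.mono_right nhdsWithin_le_nhds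
  have ht2 : Tendsto (fun t => Real.arctan (m*t)) atTop (𝓝 (Real.pi/2)) :=
    ht1.comp (Tendsto.const_mul_atTop hm tendsto_id)
  have ht3 : Tendsto (fun t : ℝ => t/(1+t^2)) atTop (𝓝 0) := by
    have hdiv : Tendsto (fun t : ℝ => (1+t^2)/t) atTop atTop := by
      apply tendsto_atTop_mono' atTop _ tendsto_id
      filter_upwards [eventually_gt_atTop (0:ℝ)] with t ht
      simp only [id_eq]
      rw [le_div_iff₀ ht]
      nlinarith [sq_nonneg t]
    have := hdiv.inv_tendsto_atTop
    convert this using 1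
    funext t
    simp [Pi.inv_apply, inv_div]
  have htH : Tendsto H atTop (𝓝 (A*(Real.pi/2) + B*0 + C*(Real.pi/2))) :=
    ((ht1.const_mul A).add (ht3.const_mul B)).add (ht2.const_mul C)
  rw [integral_Ioi_of_hasDerivAt_of_tendsto' (fun t _ => hderivH t) hint htH]
  have hH0 : H 0 = 0 := by
    simp [hHdef, Real.arctan_zero]
  rw [hH0, sub_zero, hAdef, hBdef, hCdef]
  field_simp
  ring

/-- Stieltjes transform of the equilibrium density: for `z > c`,
`∫₀^c ψ(x)/(z - x) dx = (1 + s(2z - 1))/2 + (a z + b)√((z - c)/z)`. -/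
theorem equilibrium_density_stieltjes_transform (s : ℝ) (hs : s ∈ Set.Ioc (0 : ℝ) 1)
    (z : ℝ) (hz : cEnd s < z) :
    ∫ x in Set.Ioo (0 : ℝ) (cEnd s), psi s x / (z - x)
      = (1 + s * (2 * z - 1)) / 2
        + (-s * z + (2 * s - 2 - Dlt s) / 6) * Real.sqrt ((z - cEnd s) / z) := by
  obtain ⟨hs0, hs1⟩ := hs
  have hD0 : 0 ≤ Dlt s := Real.sqrt_nonneg _
  have hD2 : (Dlt s) ^ 2 = s ^ 2 + 22 * s + 1 := Real.sq_sqrt (by nlinarith)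
  have hc : 0 < cEnd s := by
    rw [cEnd]
    apply div_pos _ (by linarith)
    nlinarith [hD0, hD2]
  have hstep : (∫ x in Set.Ioo (0 : ℝ) (cEnd s), psi s x / (z - x))
      = ∫ x in Set.Ioo (0:ℝ) (cEnd s),
        (-(1/Real.pi) * ((-s) * x + (2*s-2-Dlt s)/6) * Real.sqrt ((cEnd s - x)/x)) / (z - x) := by
    apply setIntegral_congr_fun measurableSet_Ioo
    intro x _
    unfold psi
    ring_nf
  rw [hstep, stieltjes_key (-s) ((2*s-2-Dlt s)/6) (cEnd s) z hc hz]
  have hkey : (-s)*(cEnd s)/2 - ((-s)*z + (2*s-2-Dlt s)/6) = (1 + s * (2 * z - 1)) / 2 := by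
    rw [cEnd]
    field_simp
    ring
  linear_combination hkey
end

section
/- Fix λ > −1 and a positive integer N. Then the Laguerre Unitary Ensemble partition function Z_N^{LUE} = ∫_{[0,∞)^N} ∏_{j=1}^N x_j^λ e^{−N x_j} ∏_{1≤j<k≤N}(x_k − x_j)^2 dx_1…dx_N equals N^{−N(N+λ)} ∏_{j=1}^N Γ(j+1) Γ(j+λ), where Γ is the Gamma function. -/
open MeasureTheory Real

/-- Squared Vandermonde determinant `∏_{j<k} (x_k - x_j)^2`. -/
noncomputable def vdm2 (N : ℕ) (x : Fin N → ℝ) : ℝ :=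
  ∏ p ∈ Finset.univ.filter (fun p : Fin N × Fin N => p.1 < p.2), (x p.2 - x p.1) ^ 2

/-- Laguerre Unitary Ensemble partition function
`Z_N^{LUE} = ∫_{[0,∞)^N} ∏_j x_j^λ e^{-N x_j} ∏_{j<k}(x_k - x_j)² dx`. -/
noncomputable def ZLUE (lam : ℝ) (N : ℕ) : ℝ :=
  ∫ x in Set.univ.pi (fun _ : Fin N => Set.Ici (0 : ℝ)),
    (∏ j, x j ^ lam * Real.exp (-(N : ℝ) * x j)) * vdm2 N x

namespace ZLUEAux

open Finset Polynomial Matrix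

/-- The weight function with an extra monomial factor. -/
noncomputable def wfn (lam b : ℝ) (k : ℕ) (t : ℝ) : ℝ :=
  t ^ lam * Real.exp (-b * t) * t ^ k

lemma integrableOn_wfn {lam b : ℝ} (hlam : -1 < lam) (hb : 0 < b) (k : ℕ) :
    IntegrableOn (wfn lam b k) (Set.Ici (0:ℝ)) := by
  rw [integrableOn_Ici_iff_integrableOn_Ioi]
  have hk : (0:ℝ) ≤ k := Nat.cast_nonneg k
  have h := integrableOn_rpow_mul_exp_neg_mul_rpow
    (p := 1) (s := lam + k) (b := b) (by linarith) one_pos hb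
  refine h.congr_fun (fun x hx => ?_) measurableSet_Ioi
  have hx0 : (0:ℝ) < x := hx
  beta_reduce
  rw [Real.rpow_one, Real.rpow_add hx0, Real.rpow_natCast, wfn]
  ring

lemma integral_wfn {lam b : ℝ} (hlam : -1 < lam) (hb : 0 < b) (k : ℕ) :
    ∫ t in Set.Ici (0:ℝ), wfn lam b k t =
      (1/b) ^ (lam + k + 1) * Real.Gamma (lam + k + 1) := by
  have hk : (0:ℝ) ≤ k := Nat.cast_nonneg k
  rw [MeasureTheory.integral_Ici_eq_integral_Ioi,
    ← integral_rpow_mul_exp_neg_mul_Ioi (by linarith : (0:ℝ) < lam + k + 1) hb]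
  refine setIntegral_congr_fun measurableSet_Ioi fun x hx => ?_
  have hx0 : (0:ℝ) < x := hx
  rw [add_sub_cancel_right, Real.rpow_add hx0, Real.rpow_natCast, wfn, neg_mul]
  ring

lemma vdm2_eq (N : ℕ) (x : Fin N → ℝ) : vdm2 N x = (Matrix.vandermonde x).det ^ 2 := by
  rw [vdm2, Matrix.det_vandermonde, ← Finset.prod_pow]
  simp_rw [← Finset.prod_pow]
  rw [Finset.prod_filter, Fintype.prod_prod_type]
  refine Finset.prod_congr rfl fun i _ => ?_
  rw [← Finset.filter_lt_eq_Ioi, Finset.prod_filter]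

lemma det_vandermonde_expand (N : ℕ) (x : Fin N → ℝ) :
    (Matrix.vandermonde x).det =
      ∑ σ : Equiv.Perm (Fin N), ((Equiv.Perm.sign σ : ℤ) : ℝ) *
        ∏ j, x j ^ ((σ⁻¹ j : Fin N) : ℕ) := by
  rw [Matrix.det_apply']
  refine Finset.sum_congr rfl fun σ _ => ?_
  congr 1
  calc ∏ i, Matrix.vandermonde x (σ i) i
      = ∏ i, (fun j => x j ^ ((σ⁻¹ j : Fin N) : ℕ)) (σ i) := by
        refine Finset.prod_congr rfl fun i _ => ?_
        simp [Matrix.vandermonde_apply]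
    _ = _ := by exact Equiv.prod_comp σ fun j => x j ^ ((σ⁻¹ j : Fin N) : ℕ)

lemma expand_pointwise (lam b : ℝ) (N : ℕ) (x : Fin N → ℝ) :
    (∏ j, x j ^ lam * Real.exp (-b * x j)) * vdm2 N x =
      ∑ σ : Equiv.Perm (Fin N), ∑ τ : Equiv.Perm (Fin N),
        (((Equiv.Perm.sign σ : ℤ) : ℝ) * ((Equiv.Perm.sign τ : ℤ) : ℝ)) *
          ∏ j, wfn lam b (((σ⁻¹ j : Fin N) : ℕ) + ((τ⁻¹ j : Fin N) : ℕ)) (x j) := by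
  rw [vdm2_eq, det_vandermonde_expand, sq, Finset.sum_mul_sum, Finset.mul_sum]
  refine Finset.sum_congr rfl fun σ _ => ?_
  rw [Finset.mul_sum]
  refine Finset.sum_congr rfl fun τ _ => ?_
  simp only [wfn, pow_add, Finset.prod_mul_distrib]
  ring

lemma indicator_expand (lam b : ℝ) (N : ℕ) (x : Fin N → ℝ) :
    (Set.univ.pi fun _ : Fin N => Set.Ici (0:ℝ)).indicator
      (fun x => (∏ j, x j ^ lam * Real.exp (-b * x j)) * vdm2 N x) x =
    ∑ σ : Equiv.Perm (Fin N), ∑ τ : Equiv.Perm (Fin N),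
      (((Equiv.Perm.sign σ : ℤ) : ℝ) * ((Equiv.Perm.sign τ : ℤ) : ℝ)) *
        ∏ j, (Set.Ici (0:ℝ)).indicator
          (wfn lam b (((σ⁻¹ j : Fin N) : ℕ) + ((τ⁻¹ j : Fin N) : ℕ))) (x j) := by
  by_cases hx : x ∈ Set.univ.pi fun _ : Fin N => Set.Ici (0:ℝ)
  · rw [Set.indicator_of_mem hx, expand_pointwise]
    refine Finset.sum_congr rfl fun σ _ => Finset.sum_congr rfl fun τ _ => ?_
    congr 1
    exact Finset.prod_congr rfl fun j _ =>
      (Set.indicator_of_mem (hx j (Set.mem_univ j)) _).symm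
  · rw [Set.indicator_of_notMem hx]
    symm
    simp only [Set.mem_pi, Set.mem_univ, forall_true_left] at hx
    push_neg at hx
    obtain ⟨j, hj⟩ := hx
    refine Finset.sum_eq_zero fun σ _ => Finset.sum_eq_zero fun τ _ => ?_
    rw [Finset.prod_eq_zero (Finset.mem_univ j) (Set.indicator_of_notMem hj _), mul_zero]

lemma perm_sum_eq (n : ℕ) (m : ℕ → ℝ) :
    ∑ σ : Equiv.Perm (Fin n), ∑ τ : Equiv.Perm (Fin n),
      (((Equiv.Perm.sign σ : ℤ) : ℝ) * ((Equiv.Perm.sign τ : ℤ) : ℝ)) *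
        ∏ j, m (((σ⁻¹ j : Fin n) : ℕ) + ((τ⁻¹ j : Fin n) : ℕ)) =
    (n.factorial : ℝ) * (Matrix.of fun i j : Fin n => m ((i : ℕ) + (j : ℕ))).det := by
  have step1 : ∑ σ : Equiv.Perm (Fin n), ∑ τ : Equiv.Perm (Fin n),
      (((Equiv.Perm.sign σ : ℤ) : ℝ) * ((Equiv.Perm.sign τ : ℤ) : ℝ)) *
        ∏ j, m (((σ⁻¹ j : Fin n) : ℕ) + ((τ⁻¹ j : Fin n) : ℕ)) =
      ∑ σ : Equiv.Perm (Fin n), ∑ τ : Equiv.Perm (Fin n),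
      (((Equiv.Perm.sign σ : ℤ) : ℝ) * ((Equiv.Perm.sign τ : ℤ) : ℝ)) *
        ∏ j, m (((σ j : Fin n) : ℕ) + ((τ j : Fin n) : ℕ)) := by
    refine Fintype.sum_equiv (Equiv.inv _) _ _ fun σ => ?_
    refine Fintype.sum_equiv (Equiv.inv _) _ _ fun τ => ?_
    simp [Equiv.Perm.sign_inv]
  rw [step1]
  have step2 : ∀ σ : Equiv.Perm (Fin n),
      (∑ τ : Equiv.Perm (Fin n),
        (((Equiv.Perm.sign σ : ℤ) : ℝ) * ((Equiv.Perm.sign τ : ℤ) : ℝ)) *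
          ∏ j, m (((σ j : Fin n) : ℕ) + ((τ j : Fin n) : ℕ))) =
      (Matrix.of fun i j : Fin n => m ((i : ℕ) + (j : ℕ))).det := by
    intro σ
    rw [Matrix.det_apply']
    refine (Fintype.sum_equiv (Equiv.mulRight σ) _ _ fun pp => ?_).symm
    have hsgn : (((Equiv.Perm.sign σ : ℤ) : ℝ) * ((Equiv.Perm.sign (pp * σ) : ℤ) : ℝ)) =
        ((Equiv.Perm.sign pp : ℤ) : ℝ) := by
      rw [Equiv.Perm.sign_mul]
      rcases Int.units_eq_one_or (Equiv.Perm.sign σ) with h | h <;>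
        rcases Int.units_eq_one_or (Equiv.Perm.sign pp) with h' | h' <;>
          simp [h, h']
    have hprod : (∏ j, m (((σ j : Fin n) : ℕ) + (((pp * σ) j : Fin n) : ℕ))) =
        ∏ i, m (((pp i : Fin n) : ℕ) + (i : ℕ)) := by
      calc (∏ j, m (((σ j : Fin n) : ℕ) + (((pp * σ) j : Fin n) : ℕ)))
          = ∏ j, (fun i => m (((pp i : Fin n) : ℕ) + (i : ℕ))) (σ j) := by
            refine Finset.prod_congr rfl fun j _ => ?_
            simp [Equiv.Perm.mul_apply, Nat.add_comm]
        _ = _ := by exact Equiv.prod_comp σ fun i => m (((pp i : Fin n) : ℕ) + (i : ℕ))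
    simp only [Equiv.coe_mulRight]
    rw [hsgn, hprod]
    rfl
  simp only [step2, Finset.sum_const, Finset.card_univ]
  rw [Fintype.card_perm, Fintype.card_fin, nsmul_eq_mul]

lemma Gamma_add_nat (i : ℕ) (z : ℝ) (hz : 0 < z) :
    Real.Gamma (z + i) = Real.Gamma z * (ascPochhammer ℝ i).eval z := by
  induction i with
  | zero => simp
  | succ i ih =>
    have hzi : (0:ℝ) < z + i := by positivity
    have : z + (i + 1 : ℕ) = (z + i) + 1 := by push_cast; ring
    rw [this, Real.Gamma_add_one (ne_of_gt hzi), ih, ascPochhammer_succ_eval]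
    ring

lemma det_shifted_gamma (n : ℕ) (a : ℝ) (ha : 0 < a) :
    (Matrix.of fun i j : Fin n => Real.Gamma (a + i + j)).det =
      (∏ j : Fin n, Real.Gamma (a + j)) * ∏ j : Fin n, ((j : ℕ).factorial : ℝ) := by
  have h1 : (Matrix.of fun i j : Fin n => Real.Gamma (a + i + j)).det =
      (Matrix.of fun i j : Fin n =>
        Real.Gamma (a + j) * (ascPochhammer ℝ (i : ℕ)).eval (a + j)).det := by
    congr 1
    ext i j
    have ha' : (0:ℝ) < a + j := by positivity
    rw [Matrix.of_apply, Matrix.of_apply, ← Gamma_add_nat _ _ ha']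
    ring_nf
  erw [h1, Matrix.det_mul_row (fun j : Fin n => Real.Gamma (a + j))
    (Matrix.of fun i j : Fin n => (ascPochhammer ℝ (i : ℕ)).eval (a + j))]
  congr 1
  have h2 : (Matrix.of fun i j : Fin n => (ascPochhammer ℝ (i : ℕ)).eval (a + j)) =
      (Matrix.of fun i j : Fin n => (ascPochhammer ℝ (j : ℕ)).eval (a + i))ᵀ := by
    ext i j
    rfl
  show (Matrix.of fun i j : Fin n => (ascPochhammer ℝ (i : ℕ)).eval (a + j)).det = _
  have key := Matrix.det_eval_matrixOfPolynomials_eq_det_vandermonde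
      (v := fun i : Fin n => a + (i : ℝ)) (p := fun j : Fin n => ascPochhammer ℝ (j : ℕ))
      (fun j => by exact ascPochhammer_natDegree (S := ℝ) _)
      (fun j => by exact monic_ascPochhammer _ _)
  rw [h2, Matrix.det_transpose, ← key]
  have h3 : (Matrix.vandermonde fun j : Fin n => a + j).det =
      (Matrix.vandermonde fun j : Fin n => (j : ℝ)).det := by
    rw [show (fun j : Fin n => a + (j:ℝ)) = fun j : Fin n => (j:ℝ) + a from
      funext fun j => add_comm _ _]
    exact Matrix.det_vandermonde_add _ a
  rw [h3]
  cases n with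
  | zero => simp [Matrix.det_fin_zero]
  | succ n =>
    rw [Matrix.det_vandermonde_id_eq_superFactorial n, ← Nat.prod_range_succ_factorial n,
      Fin.prod_univ_eq_prod_range (fun i => ((i.factorial : ℝ)))]
    push_cast
    rfl

end ZLUEAux

open ZLUEAux Finset Matrix in
/-- Exact evaluation: `Z_N^{LUE} = N^{-N(N+λ)} ∏_{j=1}^N Γ(j+1)Γ(j+λ)`. -/
theorem ZLUE_eq_gamma_product (lam : ℝ) (hlam : -1 < lam) (N : ℕ) (hN : 1 ≤ N) :
    ZLUE lam N =
      (N : ℝ) ^ (-(N : ℝ) * ((N : ℝ) + lam)) *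
        ∏ j ∈ Finset.Icc 1 N, Real.Gamma ((j : ℝ) + 1) * Real.Gamma ((j : ℝ) + lam) := by
  have hb : (0:ℝ) < (N : ℝ) := by exact_mod_cast Nat.lt_of_lt_of_le Nat.zero_lt_one hN
  set b : ℝ := (N : ℝ) with hbdef
  have hA : (0:ℝ) < 1/b := by positivity
  set mom : ℕ → ℝ := fun k => (1/b) ^ (lam + k + 1) * Real.Gamma (lam + k + 1) with hmom
  have hmeas : MeasurableSet (Set.univ.pi fun _ : Fin N => Set.Ici (0:ℝ)) :=
    MeasurableSet.univ_pi fun _ => measurableSet_Ici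
  have hint : ∀ k : ℕ, Integrable ((Set.Ici (0:ℝ)).indicator (wfn lam b k)) := fun k =>
    (integrable_indicator_iff measurableSet_Ici).2 (integrableOn_wfn hlam hb k)
  -- Step 1: expansion into permutation sums of products of one-dimensional integrals
  have step1 : ZLUE lam N = ∑ σ : Equiv.Perm (Fin N), ∑ τ : Equiv.Perm (Fin N),
      (((Equiv.Perm.sign σ : ℤ) : ℝ) * ((Equiv.Perm.sign τ : ℤ) : ℝ)) *
        ∏ j, mom (((σ⁻¹ j : Fin N) : ℕ) + ((τ⁻¹ j : Fin N) : ℕ)) := by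
    rw [ZLUE, ← MeasureTheory.integral_indicator hmeas,
      show ((Set.univ.pi fun _ : Fin N => Set.Ici (0:ℝ)).indicator
        (fun x => (∏ j, x j ^ lam * Real.exp (-(N:ℝ) * x j)) * vdm2 N x)) =
        (fun x : Fin N → ℝ =>
          ∑ p : Equiv.Perm (Fin N) × Equiv.Perm (Fin N),
            (((Equiv.Perm.sign p.1 : ℤ) : ℝ) * ((Equiv.Perm.sign p.2 : ℤ) : ℝ)) *
              ∏ j, (Set.Ici (0:ℝ)).indicator
                (wfn lam b (((p.1⁻¹ j : Fin N) : ℕ) + ((p.2⁻¹ j : Fin N) : ℕ))) (x j))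
      from funext fun x => by
        rw [Fintype.sum_prod_type]; exact indicator_expand lam b N x]
    rw [MeasureTheory.integral_finset_sum _ (fun p _ =>
      ((MeasureTheory.Integrable.fintype_prod (fun j => hint _)).const_mul _ : Integrable _ volume))]
    rw [Fintype.sum_prod_type]
    refine Finset.sum_congr rfl fun σ _ => Finset.sum_congr rfl fun τ _ => ?_
    erw [MeasureTheory.integral_const_mul,
      MeasureTheory.integral_fintype_prod_eq_prod (ι := Fin N)
        (fun j => (Set.Ici (0:ℝ)).indicator
          (wfn lam b (((σ⁻¹ j : Fin N) : ℕ) + ((τ⁻¹ j : Fin N) : ℕ))))]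
    congr 1
    refine Finset.prod_congr rfl fun j _ => ?_
    rw [MeasureTheory.integral_indicator measurableSet_Ici, integral_wfn hlam hb]
  rw [step1, perm_sum_eq N mom]
  -- Step 2: factor the moment matrix
  have e1 : (Matrix.of fun i j : Fin N => mom ((i : ℕ) + (j : ℕ))) =
      Matrix.of (fun i j : Fin N => ((1/b) ^ (lam + 1) * (1/b) ^ (i : ℕ)) *
        (Matrix.of (fun i j : Fin N => (1/b) ^ (j : ℕ) *
          (Matrix.of fun i j : Fin N =>
            Real.Gamma ((lam + 1) + i + j)) i j) i j)) := by
    ext i j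
    simp only [Matrix.of_apply, hmom]
    have harg : lam + ((i : ℕ) + (j : ℕ) : ℕ) + 1 = (lam + 1) + i + j := by
      push_cast; ring
    rw [harg]
    rw [show (lam+1) + (i:ℝ) + (j:ℝ) = (lam+1) + ((i:ℕ):ℝ) + ((j:ℕ):ℝ) from rfl]
    rw [Real.rpow_add hA, Real.rpow_add hA, Real.rpow_natCast, Real.rpow_natCast]
    ring
  rw [e1, Matrix.det_mul_column, Matrix.det_mul_row,
    det_shifted_gamma N (lam + 1) (by linarith)]
  -- Step 3: power bookkeeping
  have hS2 : ((∑ i : Fin N, (i : ℕ)) + (∑ i : Fin N, (i : ℕ)) : ℕ) = N * (N - 1) := by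
    have h := Fin.sum_univ_eq_sum_range (fun i => i) N
    rw [h, ← Finset.sum_range_id_mul_two N]
    ring
  have hpow : (∏ i : Fin N, ((1/b) ^ (lam + 1) * (1/b) ^ (i : ℕ))) *
      (∏ j : Fin N, (1/b) ^ (j : ℕ)) = b ^ (-(N : ℝ) * ((N : ℝ) + lam)) := by
    rw [Finset.prod_mul_distrib, Finset.prod_const, Finset.prod_pow_eq_pow_sum,
      Finset.card_univ, Fintype.card_fin]
    rw [mul_assoc, ← pow_add, hS2]
    rw [← Real.rpow_natCast ((1/b) ^ (lam+1)) N, ← Real.rpow_mul hA.le,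
      ← Real.rpow_natCast (1/b) (N * (N-1)), ← Real.rpow_add hA]
    have hcast : ((N * (N - 1) : ℕ) : ℝ) = (N : ℝ) * ((N : ℝ) - 1) := by
      push_cast [Nat.cast_sub hN]
      ring
    rw [hcast]
    rw [show (lam + 1) * (N : ℝ) + (N : ℝ) * ((N : ℝ) - 1) = (N:ℝ) * ((N:ℝ) + lam) by ring]
    rw [one_div, Real.inv_rpow hb.le, ← Real.rpow_neg hb.le, neg_mul]
  -- Step 4: Gamma bookkeeping
  have hgam : (N.factorial : ℝ) * ((∏ j : Fin N, Real.Gamma ((lam + 1) + j)) *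
      ∏ j : Fin N, ((j : ℕ).factorial : ℝ)) =
      ∏ j ∈ Finset.Icc 1 N, Real.Gamma ((j : ℝ) + 1) * Real.Gamma ((j : ℝ) + lam) := by
    rw [← Finset.Ico_add_one_right_eq_Icc, Finset.prod_Ico_eq_prod_range]
    have hfact : ∀ i : ℕ, Real.Gamma (((1 + i : ℕ) : ℝ) + 1) = ((i+1).factorial : ℝ) := by
      intro i
      rw [show ((1 + i : ℕ) : ℝ) = ((i + 1 : ℕ) : ℝ) by push_cast; ring]
      exact Real.Gamma_nat_eq_factorial (i + 1)
    have hG : ∀ i : ℕ, Real.Gamma (((1 + i : ℕ) : ℝ) + lam) = Real.Gamma ((lam + 1) + i) := by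
      intro i
      congr 1
      push_cast
      ring
    calc (N.factorial : ℝ) * ((∏ j : Fin N, Real.Gamma ((lam + 1) + j)) *
        ∏ j : Fin N, ((j : ℕ).factorial : ℝ))
        = (N.factorial : ℝ) * ((∏ i ∈ Finset.range N, Real.Gamma ((lam + 1) + i)) *
          ∏ i ∈ Finset.range N, ((i.factorial : ℝ))) := by
          rw [Fin.prod_univ_eq_prod_range (fun i : ℕ => Real.Gamma ((lam + 1) + i)),
            Fin.prod_univ_eq_prod_range (fun i : ℕ => ((i.factorial : ℝ)))]
      _ = (∏ i ∈ Finset.range N, ((i+1).factorial : ℝ)) *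
          ∏ i ∈ Finset.range N, Real.Gamma ((lam + 1) + i) := by
          have : ∏ i ∈ Finset.range N, ((i+1).factorial : ℝ) =
              (N.factorial : ℝ) * ∏ i ∈ Finset.range N, ((i.factorial : ℝ)) := by
            rw [← Nat.cast_prod, ← Nat.cast_prod]
            rw [show ∏ i ∈ Finset.range N, (i+1).factorial =
              N.factorial * ∏ i ∈ Finset.range N, i.factorial by
                simp only [Nat.factorial_succ]
                rw [Finset.prod_mul_distrib, Finset.prod_range_add_one_eq_factorial]]
            push_cast
            ring
          rw [this]
          ring
      _ = _ := by
          rw [← Finset.prod_mul_distrib]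
          refine (Finset.prod_congr rfl fun i _ => ?_).symm
          rw [hfact i, hG i]
  rw [← hpow, ← hgam]
  ring
end

section
/- Let z > 0 be a real number and M a natural number. Then the (M+1)×(M+1) determinant det[Γ(z + i + j)]_{i,j=0}^{M} equals ∏_{j=0}^{M} j! · Γ(z + j), where Γ is the Gamma function. -/
open Real

lemma gamma_add_nat_aux (x : ℝ) (hx : 0 < x) (n : ℕ) :
    Real.Gamma (x + n) = Real.Gamma x * (ascPochhammer ℝ n).eval x := by
  induction n with
  | zero => simp
  | succ n ih =>
    have hxn : x + (n : ℝ) ≠ 0 := by positivity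
    have : x + ((n : ℕ) + 1 : ℕ) = (x + n) + 1 := by push_cast; ring
    rw [this, Real.Gamma_add_one hxn, ih, ascPochhammer_succ_right]
    simp [Polynomial.eval_mul]
    ring

/-- Determinant evaluation of the Gamma-function Hankel-type matrix:
`det[Γ(z + i + j)]_{i,j=0}^M = ∏_{j=0}^M j! Γ(z + j)`. -/
theorem det_gamma_matrix (z : ℝ) (hz : 0 < z) (M : ℕ) :
    Matrix.det (Matrix.of fun i j : Fin (M + 1) => Real.Gamma (z + (i : ℕ) + (j : ℕ)))
      = ∏ j ∈ Finset.range (M + 1), (Nat.factorial j : ℝ) * Real.Gamma (z + j) := by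
  have hentry : ∀ i j : Fin (M + 1), Real.Gamma (z + (i : ℕ) + (j : ℕ))
      = Real.Gamma (z + (j : ℕ)) * (ascPochhammer ℝ (i : ℕ)).eval (z + (j : ℕ)) := by
    intro i j
    have : z + (i : ℕ) + (j : ℕ) = (z + (j : ℕ)) + (i : ℕ) := by ring
    rw [this, gamma_add_nat_aux _ (by positivity)]
  have h1 : (Matrix.of fun i j : Fin (M + 1) => Real.Gamma (z + (i : ℕ) + (j : ℕ)))
      = Matrix.of fun i j : Fin (M + 1) =>
        Real.Gamma (z + (j : ℕ)) * (ascPochhammer ℝ (i : ℕ)).eval (z + (j : ℕ)) := by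
    ext i j; exact hentry i j
  rw [h1, Matrix.det_mul_row (fun j : Fin (M + 1) => Real.Gamma (z + (j : ℕ)))
    (fun i j : Fin (M + 1) => (ascPochhammer ℝ (i : ℕ)).eval (z + (j : ℕ)))]
  have h2 : (Matrix.det fun i j : Fin (M + 1) =>
      (ascPochhammer ℝ (i : ℕ)).eval (z + (j : ℕ)))
      = (Matrix.of fun i j : Fin (M + 1) =>
        (ascPochhammer ℝ (j : ℕ)).eval (z + (i : ℕ))).det := by
    rw [← Matrix.det_transpose]
    rfl
  rw [h2, ← Matrix.det_eval_matrixOfPolynomials_eq_det_vandermonde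
      (fun i : Fin (M + 1) => z + (i : ℕ))
      (fun i : Fin (M + 1) => ascPochhammer ℝ (i : ℕ))
      (fun i => by exact ascPochhammer_natDegree (S := ℝ) _)
      (fun i => by exact monic_ascPochhammer ℝ _)]
  have h3 : (Matrix.vandermonde fun i : Fin (M + 1) => z + (i : ℕ)).det
      = (Nat.superFactorial M : ℝ) := by
    have e : (fun i : Fin (M + 1) => z + ((i : ℕ) : ℝ))
        = fun i : Fin (M + 1) => ((i : ℕ) : ℝ) + z := by funext i; ring
    rw [e, Matrix.det_vandermonde_add, Matrix.det_vandermonde_id_eq_superFactorial]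
  rw [h3]
  rw [Finset.prod_mul_distrib]
  rw [← Nat.prod_range_succ_factorial M]
  push_cast
  rw [Fin.prod_univ_eq_prod_range (fun j => Real.Gamma (z + (j : ℕ)))]
  ring
end

section
/- Let N be a positive integer and let w : ℝ → [0,∞) be a measurable function such that x ↦ |x|^k w(x) is integrable on ℝ for every k ≤ 2N−2. Define the moments μ_k = ∫_ℝ x^k w(x) dx. Then (Heine's identity) ∫_{ℝ^N} ∏_{j=1}^N w(x_j) ∏_{1≤j<k≤N}(x_k − x_j)^2 dx_1…dx_N = N! · det[μ_{i+j}]_{i,j=0}^{N−1}. -/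
open MeasureTheory Real

lemma prod_filter_lt_pairs {n : ℕ} (f : Fin n × Fin n → ℝ) :
    ∏ p ∈ Finset.univ.filter (fun p : Fin n × Fin n => p.1 < p.2), f p
      = ∏ i : Fin n, ∏ j ∈ Finset.Ioi i, f (i, j) := by
  rw [Finset.prod_filter, ← Finset.univ_product_univ, Finset.prod_product]
  refine Finset.prod_congr rfl fun i _ => ?_
  have : Finset.Ioi i = Finset.univ.filter (fun j => i < j) := by
    ext j; simp
  rw [this, Finset.prod_filter]

lemma vdm2_eq_det_sq (N : ℕ) (x : Fin N → ℝ) :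
    vdm2 N x = ((Matrix.vandermonde x).det) ^ 2 := by
  rw [Matrix.det_vandermonde, vdm2, prod_filter_lt_pairs (fun p => (x p.2 - x p.1) ^ 2)]
  rw [← Finset.prod_pow]
  exact Finset.prod_congr rfl fun i _ => Finset.prod_pow _ _ _

lemma det_vandermonde_sum {N : ℕ} (x : Fin N → ℝ) :
    (Matrix.vandermonde x).det
      = ∑ σ : Equiv.Perm (Fin N), ((Equiv.Perm.sign σ : ℤ) : ℝ) * ∏ i, x i ^ (σ i : ℕ) := by
  rw [← Matrix.det_transpose, Matrix.det_apply']
  refine Finset.sum_congr rfl fun σ _ => ?_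
  congr 1

/-- Heine's identity: the `N`-fold integral of `∏_j w(x_j)` against the squared Vandermonde
equals `N!` times the Hankel determinant of the moments `μ_k = ∫ x^k w(x) dx`. -/
theorem heine_identity (N : ℕ) (hN : 0 < N) (w : ℝ → ℝ)
    (hw_meas : Measurable w) (hw_nonneg : ∀ x, 0 ≤ w x)
    (hw_int : ∀ k : ℕ, k ≤ 2 * N - 2 → Integrable (fun x : ℝ => |x| ^ k * w x)) :
    ∫ x : Fin N → ℝ, (∏ j, w (x j)) * vdm2 N x =
      (Nat.factorial N : ℝ) *
        Matrix.det (Matrix.of fun i j : Fin N =>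
          ∫ x : ℝ, x ^ ((i : ℕ) + (j : ℕ)) * w x) := by
  classical
  set μ : ℕ → ℝ := fun k => ∫ x : ℝ, x ^ k * w x with hμ
  -- integrability of x^k * w x for k ≤ 2N-2
  have hint : ∀ k : ℕ, k ≤ 2 * N - 2 → Integrable (fun x : ℝ => x ^ k * w x) := by
    intro k hk
    refine (hw_int k hk).mono' ?_ ?_
    · exact ((measurable_id.pow_const k).mul hw_meas).aestronglyMeasurable
    · filter_upwards with x
      rw [Real.norm_eq_abs, abs_mul, abs_pow, abs_of_nonneg (hw_nonneg x)]
  have hexp : ∀ (σ τ : Equiv.Perm (Fin N)) (i : Fin N),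
      (σ i : ℕ) + (τ i : ℕ) ≤ 2 * N - 2 := by
    intro σ τ i
    have h1 : (σ i : ℕ) < N := (σ i).isLt
    have h2 : (τ i : ℕ) < N := (τ i).isLt
    omega
  -- pointwise expansion of the integrand
  have key : ∀ x : Fin N → ℝ,
      (∏ j, w (x j)) * vdm2 N x
        = ∑ p : Equiv.Perm (Fin N) × Equiv.Perm (Fin N),
            (((Equiv.Perm.sign p.1 : ℤ) : ℝ) * ((Equiv.Perm.sign p.2 : ℤ) : ℝ)) *
              ∏ i, (x i ^ ((p.1 i : ℕ) + (p.2 i : ℕ)) * w (x i)) := by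
    intro x
    rw [vdm2_eq_det_sq, det_vandermonde_sum, sq, Fintype.sum_mul_sum, Finset.mul_sum,
      Fintype.sum_prod_type]
    refine Finset.sum_congr rfl fun σ _ => ?_
    rw [Finset.mul_sum]
    refine Finset.sum_congr rfl fun τ _ => ?_
    simp only [pow_add, Finset.prod_mul_distrib]
    ring
  simp only [key]
  -- swap integral and sum
  rw [integral_finset_sum]
  · have hterm : ∀ p : Equiv.Perm (Fin N) × Equiv.Perm (Fin N),
        (∫ x : Fin N → ℝ,
          (((Equiv.Perm.sign p.1 : ℤ) : ℝ) * ((Equiv.Perm.sign p.2 : ℤ) : ℝ)) *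
            ∏ i, (x i ^ ((p.1 i : ℕ) + (p.2 i : ℕ)) * w (x i)))
          = (((Equiv.Perm.sign p.1 : ℤ) : ℝ) * ((Equiv.Perm.sign p.2 : ℤ) : ℝ)) *
              ∏ i, μ ((p.1 i : ℕ) + (p.2 i : ℕ)) := by
      intro p
      rw [integral_const_mul, MeasureTheory.volume_pi,
        MeasureTheory.integral_fintype_prod_eq_prod (ι := Fin N)
          (fun i (t : ℝ) => t ^ ((p.1 i : ℕ) + (p.2 i : ℕ)) * w t)]
    simp only [hterm]
    -- algebraic identity with determinants
    rw [← Finset.univ_product_univ, Finset.sum_product]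
    have inner : ∀ σ : Equiv.Perm (Fin N),
        (∑ τ : Equiv.Perm (Fin N),
          (((Equiv.Perm.sign σ : ℤ) : ℝ) * ((Equiv.Perm.sign τ : ℤ) : ℝ)) *
            ∏ i, μ ((σ i : ℕ) + (τ i : ℕ)))
          = Matrix.det (Matrix.of fun i j : Fin N => μ ((i : ℕ) + (j : ℕ))) := by
      intro σ
      have hdet : (∑ τ : Equiv.Perm (Fin N),
          ((Equiv.Perm.sign τ : ℤ) : ℝ) * ∏ i, μ ((σ i : ℕ) + (τ i : ℕ)))
            = Matrix.det ((Matrix.of fun i j : Fin N => μ ((i : ℕ) + (j : ℕ))).submatrix id σ) := by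
        rw [Matrix.det_apply']
        refine Finset.sum_congr rfl fun τ _ => ?_
        congr 1
        refine Finset.prod_congr rfl fun i _ => ?_
        simp [Matrix.submatrix, Nat.add_comm]
      calc (∑ τ : Equiv.Perm (Fin N),
          (((Equiv.Perm.sign σ : ℤ) : ℝ) * ((Equiv.Perm.sign τ : ℤ) : ℝ)) *
            ∏ i, μ ((σ i : ℕ) + (τ i : ℕ)))
          = ((Equiv.Perm.sign σ : ℤ) : ℝ) * ∑ τ : Equiv.Perm (Fin N),
              ((Equiv.Perm.sign τ : ℤ) : ℝ) * ∏ i, μ ((σ i : ℕ) + (τ i : ℕ)) := by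
            rw [Finset.mul_sum]; exact Finset.sum_congr rfl fun τ _ => by ring
        _ = ((Equiv.Perm.sign σ : ℤ) : ℝ) * (((Equiv.Perm.sign σ : ℤ) : ℝ) *
              Matrix.det (Matrix.of fun i j : Fin N => μ ((i : ℕ) + (j : ℕ)))) := by
            rw [hdet, Matrix.det_permute']
        _ = Matrix.det (Matrix.of fun i j : Fin N => μ ((i : ℕ) + (j : ℕ))) := by
            have : ((Equiv.Perm.sign σ : ℤ) : ℝ) * ((Equiv.Perm.sign σ : ℤ) : ℝ) = 1 := by
              rcases Int.units_eq_one_or (Equiv.Perm.sign σ) with h | h <;> rw [h] <;> norm_num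
            rw [← mul_assoc, this, one_mul]
    simp only [inner]
    rw [Finset.sum_const, Finset.card_univ, Fintype.card_perm, Fintype.card_fin, nsmul_eq_mul]
  · intro p _
    refine Integrable.const_mul ?_ _
    exact MeasureTheory.Integrable.fintype_prod
      (f := fun i (t : ℝ) => t ^ ((p.1 i : ℕ) + (p.2 i : ℕ)) * w t)
      (fun i => hint _ (hexp p.1 p.2 i))
end
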